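/- For every real δ > 0 and every integer r with 1 ≤ r ≤ s_n, the number of elements b ∈ F_q for which |N_{f_b}(r) − r·P/q| ≥ δ·√(r·q^{n-2}) is at most q/δ². -/

import Mathlib

/-- The box `X^{n+1}(r) = {0,…,s₁−1} × ⋯ × {0,…,s_n−1} × {0,…,r−1}` of exponent tuples,
where `sᵢ` is the multiplicative order of `g i` and the last coordinate is truncated
at `r`. -/
noncomputable def expBox {F : Type*} [Monoid F] {n : ℕ} (g : Fin (n + 1) → Fˣ) (r : ℕ) :
    Finset (Fin (n + 1) → ℕ) :=
  Fintype.piFinset fun i => Finset.range (if i = Fin.last n then r else orderOf (g i))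

/-- The exponential polynomial `f_b(x) = a₁g₁^{x₁} + ⋯ + a_{n+1}g_{n+1}^{x_{n+1}} − b`. -/
noncomputable def expPoly {F : Type*} [Field F] {n : ℕ} (a g : Fin (n + 1) → Fˣ) (b : F)
    (x : Fin (n + 1) → ℕ) : F :=
  (∑ i, (a i : F) * (g i : F) ^ x i) - b

/-- `S_{f_b}(r)`: the set of zeros of `f_b` in the box `X^{n+1}(r)`. -/
noncomputable def solSet {F : Type*} [Field F] [DecidableEq F] {n : ℕ} (a g : Fin (n + 1) → Fˣ)
    (b : F) (r : ℕ) : Finset (Fin (n + 1) → ℕ) :=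
  (expBox g r).filter fun x => expPoly a g b x = 0

/-- `N_{f_b}(r) = #S_{f_b}(r)`. -/
noncomputable def solCount {F : Type*} [Field F] [DecidableEq F] {n : ℕ} (a g : Fin (n + 1) → Fˣ)
    (b : F) (r : ℕ) : ℕ :=
  (solSet a g b r).card

/-- `P = ∏_{l=1}^{n} s_l`, the product of the multiplicative orders of all the `g i`
except the last one. -/
noncomputable def ordProd {F : Type*} [Monoid F] {n : ℕ} (g : Fin (n + 1) → Fˣ) : ℕ :=
  ∏ i : Fin n, orderOf (g i.castSucc)

set_option linter.unusedSectionVars false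
set_option linter.unusedVariables false

section aux
variable {F : Type*} [Field F] [Fintype F] [DecidableEq F]


private lemma addChar_map_finsum_x (ψ : AddChar F ℂ) {ι : Type*} (s : Finset ι) (f : ι → F) :
    ψ (∑ i ∈ s, f i) = ∏ i ∈ s, ψ (f i) := by
  induction s using Finset.cons_induction with
  | empty => simp
  | cons i s hi ih => rw [Finset.sum_cons, Finset.prod_cons, AddChar.map_add_eq_mul, ih]

private lemma sum_normsq_x {ψ : AddChar F ℂ} (hψ : ψ.IsPrimitive)
    {ι : Type*} [DecidableEq ι] (B : Finset ι) (v : ι → F) :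
    ∑ t : F, ‖∑ i ∈ B, ψ (t * v i)‖ ^ 2 =
      (Fintype.card F : ℝ) * (((B ×ˢ B).filter fun p => v p.1 = v p.2).card : ℝ) := by
  have hchar : 0 < ringChar F := (CharP.char_is_prime F (ringChar F)).pos
  have hconj : ∀ z : F, (starRingEnd ℂ) (ψ z) = ψ (-z) := fun z => by
    rw [AddChar.starComp_apply hchar, AddChar.inv_apply]
  have key : ∀ t : F, ((‖∑ i ∈ B, ψ (t * v i)‖ ^ 2 : ℝ) : ℂ)
      = ∑ p ∈ B ×ˢ B, ψ (t * (v p.1 - v p.2)) := by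
    intro t
    rw [show ((‖∑ i ∈ B, ψ (t * v i)‖ ^ 2 : ℝ) : ℂ)
        = (∑ i ∈ B, ψ (t * v i)) * (starRingEnd ℂ) (∑ i ∈ B, ψ (t * v i)) by
      rw [Complex.mul_conj']; push_cast; ring]
    rw [map_sum, Finset.sum_mul_sum, ← Finset.sum_product']
    refine Finset.sum_congr rfl fun p _ => ?_
    rw [hconj, ← AddChar.map_add_eq_mul]
    congr 1
    ring
  have main : (((∑ t : F, ‖∑ i ∈ B, ψ (t * v i)‖ ^ 2 : ℝ)) : ℂ)
      = ((Fintype.card F : ℝ) * (((B ×ˢ B).filter fun p => v p.1 = v p.2).card : ℝ) : ℝ) := by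
    push_cast
    calc ∑ t : F, ((‖∑ i ∈ B, ψ (t * v i)‖ : ℂ) ^ 2)
        = ∑ t : F, ∑ p ∈ B ×ˢ B, ψ (t * (v p.1 - v p.2)) := by
          refine Finset.sum_congr rfl fun t _ => ?_
          have := key t
          push_cast at this
          exact this
      _ = ∑ p ∈ B ×ˢ B, ∑ t : F, ψ (t * (v p.1 - v p.2)) := Finset.sum_comm
      _ = ∑ p ∈ B ×ˢ B, (if v p.1 = v p.2 then (Fintype.card F : ℂ) else 0) := by
          refine Finset.sum_congr rfl fun p _ => ?_
          rw [AddChar.sum_mulShift _ hψ]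
          simp [sub_eq_zero]
      _ = ∑ p ∈ (B ×ˢ B).filter fun p => v p.1 = v p.2, (Fintype.card F : ℂ) :=
          (Finset.sum_filter _ _).symm
      _ = (Fintype.card F : ℂ) * ((((B ×ˢ B).filter fun p => v p.1 = v p.2).card : ℕ) : ℂ) := by
          rw [Finset.sum_const, nsmul_eq_mul]; ring
  exact_mod_cast main

private lemma sum_range_zmod_x {s : ℕ} [NeZero s] (f : ℕ → ℂ) :
    ∑ y : ZMod s, f y.val = ∑ x ∈ Finset.range s, f x :=
  Finset.sum_nbij' (fun y => y.val) (fun x => (x : ZMod s))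
    (fun y _ => Finset.mem_range.2 y.val_lt) (fun x _ => Finset.mem_univ _)
    (fun y _ => ZMod.natCast_rightInverse y)
    (fun x hx => ZMod.val_cast_of_lt (Finset.mem_range.1 hx))
    (fun y _ => rfl)


private lemma bound_full_x {ψ : AddChar F ℂ} (hψ : ψ.IsPrimitive) (c u : Fˣ) {t : F} (ht : t ≠ 0) :
    ‖∑ x ∈ Finset.range (orderOf u), ψ (t * ((c : F) * (u : F) ^ x))‖ ^ 2
      ≤ (Fintype.card F : ℝ) := by
  set s := orderOf u with hs
  haveI : NeZero s := ⟨(orderOf_pos u).ne'⟩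
  set A : F → ℂ := fun w => ∑ y : ZMod s, ψ (w * ((u : F) ^ y.val)) with hA
  have hpow : ∀ j y : ZMod s, (u : F) ^ ((j + y).val) = (u : F) ^ j.val * (u : F) ^ y.val := by
    intro j y
    have h1 : (u : Fˣ) ^ ((j + y).val) = u ^ (j.val + y.val) := by
      rw [ZMod.val_add]; exact pow_mod_orderOf _ _
    rw [← pow_add, ← Units.val_pow_eq_pow_val, ← Units.val_pow_eq_pow_val, h1]
  have hinv : ∀ (w : F) (j : ZMod s), A (w * (u : F) ^ j.val) = A w := by
    intro w j
    calc A (w * (u : F) ^ j.val)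
        = ∑ y : ZMod s, ψ (w * (u : F) ^ ((j + y).val)) := by
          rw [hA]
          refine Finset.sum_congr rfl fun y _ => ?_
          congr 1
          rw [hpow]; ring
      _ = A w := by
          rw [hA]
          exact Fintype.sum_equiv (Equiv.addLeft j) _ _ (fun y => by simp)
  have hvinj : Function.Injective fun y : ZMod s => (u : F) ^ y.val := by
    intro y z h
    have h1 : (u : Fˣ) ^ y.val = u ^ z.val := by
      apply Units.ext
      simpa [Units.val_pow_eq_pow_val] using h
    have h2 := pow_injOn_Iio_orderOf (x := u)
      (Set.mem_Iio.2 (hs ▸ y.val_lt)) (Set.mem_Iio.2 (hs ▸ z.val_lt)) h1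
    calc y = ((y.val : ℕ) : ZMod s) := (ZMod.natCast_rightInverse y).symm
      _ = ((z.val : ℕ) : ZMod s) := by rw [h2]
      _ = z := ZMod.natCast_rightInverse z
  have htot : ∑ w : F, ‖A w‖ ^ 2 = (Fintype.card F : ℝ) * s := by
    rw [hA]
    rw [sum_normsq_x hψ Finset.univ (fun y : ZMod s => (u : F) ^ y.val)]
    congr 1
    have : ((Finset.univ ×ˢ Finset.univ).filter
        fun p : ZMod s × ZMod s => (u:F) ^ p.1.val = (u:F) ^ p.2.val)
        = (Finset.univ : Finset (ZMod s)).diag := by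
      ext p
      simp only [Finset.mem_filter, Finset.mem_product, Finset.mem_diag, Finset.mem_univ,
        true_and]
      exact ⟨fun h => hvinj h, fun h => by rw [h]⟩
    rw [this, Finset.diag_card, Finset.card_univ, ZMod.card]
  have hw0 : t * (c : F) ≠ 0 := mul_ne_zero ht (Units.ne_zero c)
  have hstep : (s : ℝ) * ‖A (t * (c : F))‖ ^ 2 ≤ ∑ w : F, ‖A w‖ ^ 2 := by
    have hminj : Function.Injective fun j : ZMod s => (t * (c : F)) * (u : F) ^ j.val := by
      intro y z h
      exact hvinj (mul_left_cancel₀ hw0 h)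
    calc (s : ℝ) * ‖A (t * (c : F))‖ ^ 2
        = ∑ j : ZMod s, ‖A ((t * (c : F)) * (u : F) ^ j.val)‖ ^ 2 := by
          simp_rw [hinv]
          rw [Finset.sum_const, Finset.card_univ, ZMod.card, nsmul_eq_mul]
      _ = ∑ w ∈ Finset.univ.image (fun j : ZMod s => (t * (c : F)) * (u : F) ^ j.val),
            ‖A w‖ ^ 2 := by rw [Finset.sum_image fun y _ z _ h => hminj h]
      _ ≤ ∑ w : F, ‖A w‖ ^ 2 :=
          Finset.sum_le_sum_of_subset_of_nonneg (Finset.subset_univ _)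
            (fun _ _ _ => by positivity)
  have hTA : ∑ x ∈ Finset.range s, ψ (t * ((c : F) * (u : F) ^ x)) = A (t * (c : F)) := by
    simp only [hA]
    rw [← sum_range_zmod_x (fun x => ψ (t * ((c : F) * (u : F) ^ x)))]
    exact Finset.sum_congr rfl fun y _ => by rw [mul_assoc]
  rw [hTA]
  have hs0 : (0 : ℝ) < s := by
    have := orderOf_pos u; positivity
  have := hstep.trans (le_of_eq htot)
  nlinarith [this]

end aux


/-- Let `q = p^ν` and `F` the finite field with `q` elements.  With `n + 1 ≥ 2` variables,
`a i, g i ∈ Fˣ` with orders `s i`, and `P` the product of the first `n` orders: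
for every real `δ > 0` and every integer `r` with `1 ≤ r ≤ s_{n+1}`, the number of
elements `b ∈ F` for which `|N_{f_b}(r) − r·P/q| ≥ δ·√(r·q^{(n+1)−2})` is at most
`q/δ²`. -/
theorem statement0 (p ν : ℕ) (hp : p.Prime) (hν : 1 ≤ ν)
    (F : Type*) [Field F] [Fintype F] [DecidableEq F]
    (hq : Fintype.card F = p ^ ν)
    (n : ℕ) (hn : 1 ≤ n)
    (a g : Fin (n + 1) → Fˣ)
    (δ : ℝ) (hδ : 0 < δ)
    (r : ℕ) (hr1 : 1 ≤ r) (hrs : r ≤ orderOf (g (Fin.last n))) :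
    (({b : F |
        δ * Real.sqrt ((r : ℝ) * (Fintype.card F : ℝ) ^ (n - 1)) ≤
          abs ((solCount a g b r : ℝ) -
            (r : ℝ) * (ordProd g : ℝ) / (Fintype.card F : ℝ))}.ncard : ℝ)) ≤
      (Fintype.card F : ℝ) / δ ^ 2 := by
  classical
  have hq0 : 0 < Fintype.card F := Fintype.card_pos
  have hqR : (0 : ℝ) < (Fintype.card F : ℝ) := by exact_mod_cast hq0
  -- the additive character
  haveI hp' : Fact (ringChar F).Prime := ⟨CharP.char_is_prime F _⟩
  haveI : NeZero (ringChar F) := ⟨hp'.1.ne_zero⟩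
  letI : Algebra (ZMod (ringChar F)) F := ZMod.algebra F (ringChar F)
  set ψ : AddChar F ℂ := (ZMod.stdAddChar (N := ringChar F)).compAddMonoidHom
      (Algebra.trace (ZMod (ringChar F)) F).toAddMonoidHom with hψdef
  have hψ : ψ.IsPrimitive := by
    refine AddChar.IsPrimitive.of_ne_one (AddChar.ne_one_iff.2 ?_)
    obtain ⟨x, hx⟩ := FiniteField.trace_to_zmod_nondegenerate F (one_ne_zero (α := F))
    rw [one_mul] at hx
    refine ⟨x, fun h => hx ?_⟩
    have h' : ZMod.stdAddChar ((Algebra.trace (ZMod (ringChar F)) F) x)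
        = ZMod.stdAddChar (0 : ZMod (ringChar F)) := by
      rw [AddChar.map_zero_eq_one]; exact h
    exact ZMod.injective_stdAddChar h'
  -- the value map and basic counting
  set val : (Fin (n + 1) → ℕ) → F := fun x => ∑ i, (a i : F) * (g i : F) ^ x i with hval
  have hsol : ∀ b : F, solSet a g b r = (expBox g r).filter fun x => val x = b := by
    intro b
    apply Finset.filter_congr
    intro x _
    simp only [expPoly, hval, sub_eq_zero]
  set P := ordProd g with hP
  have hbox : (expBox g r).card = P * r := by
    rw [expBox, Fintype.card_piFinset]
    simp only [Finset.card_range]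
    rw [Fin.prod_univ_castSucc, if_pos rfl]
    congr 1
    exact Finset.prod_congr rfl fun i _ => if_neg (Fin.castSucc_lt_last i).ne
  have hNsum : ∑ b : F, (solCount a g b r : ℝ) = (P : ℝ) * r := by
    have h1 := Finset.card_eq_sum_card_fiberwise
      (f := val) (s := expBox g r) (t := Finset.univ) fun x _ => Finset.mem_univ _
    have h2 : ∀ b : F, solCount a g b r = ((expBox g r).filter fun x => val x = b).card :=
      fun b => by rw [solCount, hsol]
    rw [show (((P : ℝ)) * r) = ((P * r : ℕ) : ℝ) by push_cast; ring, ← hbox, h1]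
    push_cast
    exact Finset.sum_congr rfl fun b _ => by rw [h2]
  set E := (((expBox g r) ×ˢ (expBox g r)).filter fun p => val p.1 = val p.2).card with hE
  have hNsq : ∑ b : F, (solCount a g b r : ℝ) ^ 2 = (E : ℝ) := by
    have key : E = ∑ b : F, (solCount a g b r) * (solCount a g b r) := by
      rw [hE, Finset.card_eq_sum_card_fiberwise
        (f := fun p => val p.1) (t := Finset.univ) (fun x _ => Finset.mem_univ _)]
      refine Finset.sum_congr rfl fun b _ => ?_
      rw [solCount, hsol, ← Finset.card_product]
      congr 1
      ext q
      simp only [Finset.mem_filter, Finset.mem_product]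
      constructor
      · rintro ⟨⟨⟨h1, h2⟩, h3⟩, h4⟩
        exact ⟨⟨h1, h4⟩, h2, h3 ▸ h4⟩
      · rintro ⟨⟨h1, h2⟩, h3, h4⟩
        exact ⟨⟨⟨h1, h3⟩, h2.trans h4.symm⟩, h2⟩
    rw [key]
    push_cast
    exact Finset.sum_congr rfl fun b _ => by ring
  -- character sums
  set T : Fin (n + 1) → F → ℂ := fun i t =>
    ∑ x ∈ Finset.range (if i = Fin.last n then r else orderOf (g i)),
      ψ (t * ((a i : F) * (g i : F) ^ x)) with hT
  set S : F → ℂ := fun t => ∑ x ∈ expBox g r, ψ (t * val x) with hS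
  have hfactor : ∀ t, S t = ∏ i, T i t := by
    intro t
    simp only [hS, hT]
    rw [Finset.prod_univ_sum]
    rw [show expBox g r = Fintype.piFinset
      (fun i => Finset.range (if i = Fin.last n then r else orderOf (g i))) from rfl]
    refine Finset.sum_congr rfl fun x _ => ?_
    simp only [hval]
    rw [Finset.mul_sum]
    exact addChar_map_finsum_x ψ Finset.univ (fun i => t * ((a i : F) * (g i : F) ^ x i))
  have hqE : ∑ t : F, ‖S t‖ ^ 2 = (Fintype.card F : ℝ) * (E : ℝ) := by
    simp only [hS]
    rw [sum_normsq_x hψ (expBox g r) val, hE]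
  have hS0 : S 0 = ((P * r : ℕ) : ℂ) := by
    simp only [hS]
    rw [← hbox]
    simp [AddChar.map_zero_eq_one]
  have hTlast : ∑ t : F, ‖T (Fin.last n) t‖ ^ 2 = (Fintype.card F : ℝ) * r := by
    simp only [hT, eq_self_iff_true, if_true]
    rw [sum_normsq_x hψ (Finset.range r) (fun x => (a (Fin.last n) : F) * (g (Fin.last n) : F) ^ x)]
    congr 1
    have hdiag : ((Finset.range r ×ˢ Finset.range r).filter fun p =>
        (a (Fin.last n) : F) * (g (Fin.last n) : F) ^ p.1 =
        (a (Fin.last n) : F) * (g (Fin.last n) : F) ^ p.2) = (Finset.range r).diag := by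
      ext q
      simp only [Finset.mem_filter, Finset.mem_product, Finset.mem_diag, Finset.mem_range]
      constructor
      · rintro ⟨⟨h1, h2⟩, h3⟩
        refine ⟨h1, ?_⟩
        have h4 : (g (Fin.last n) : F) ^ q.1 = (g (Fin.last n) : F) ^ q.2 :=
          mul_left_cancel₀ (Units.ne_zero _) h3
        have h5 : (g (Fin.last n) : Fˣ) ^ q.1 = g (Fin.last n) ^ q.2 := by
          apply Units.ext; simpa [Units.val_pow_eq_pow_val] using h4
        exact pow_injOn_Iio_orderOf (Set.mem_Iio.2 (lt_of_lt_of_le h1 hrs))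
          (Set.mem_Iio.2 (lt_of_lt_of_le h2 hrs)) h5
      · rintro ⟨h1, h2⟩
        exact ⟨⟨h1, h2 ▸ h1⟩, by rw [h2]⟩
    rw [hdiag, Finset.diag_card, Finset.card_range]
  have hSbound : ∀ t : F, t ≠ 0 →
      ‖S t‖ ^ 2 ≤ (Fintype.card F : ℝ) ^ n * ‖T (Fin.last n) t‖ ^ 2 := by
    intro t ht
    rw [hfactor t, norm_prod, ← Finset.prod_pow, Fin.prod_univ_castSucc]
    refine mul_le_mul_of_nonneg_right ?_ (by positivity)
    calc ∏ i : Fin n, ‖T i.castSucc t‖ ^ 2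
        ≤ ∏ _i : Fin n, (Fintype.card F : ℝ) := by
          refine Finset.prod_le_prod (fun i _ => by positivity) fun i _ => ?_
          simp only [hT, if_neg (Fin.castSucc_lt_last i).ne]
          exact bound_full_x hψ (a i.castSucc) (g i.castSucc) ht
      _ = (Fintype.card F : ℝ) ^ n := by
          rw [Finset.prod_const, Finset.card_univ, Fintype.card_fin]
  -- variance bound
  set m : ℝ := (r : ℝ) * (P : ℝ) / (Fintype.card F : ℝ) with hm
  have hvar : ∑ b : F, ((solCount a g b r : ℝ) - m) ^ 2
      ≤ (Fintype.card F : ℝ) ^ n * r := by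
    have hvar1 : ∑ b : F, ((solCount a g b r : ℝ) - m) ^ 2
        = (E : ℝ) - ((P : ℝ) * r) ^ 2 / (Fintype.card F : ℝ) := by
      have : ∀ b : F, ((solCount a g b r : ℝ) - m) ^ 2
          = (solCount a g b r : ℝ) ^ 2 - 2 * m * (solCount a g b r : ℝ) + m ^ 2 := fun b => by
        ring
      rw [Finset.sum_congr rfl fun b _ => this b]
      rw [Finset.sum_add_distrib, Finset.sum_sub_distrib, hNsq, ← Finset.mul_sum, hNsum,
        Finset.sum_const, Finset.card_univ, nsmul_eq_mul]
      rw [hm]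
      field_simp
      ring
    have hsplit : (Fintype.card F : ℝ) * (E : ℝ) - ((P : ℝ) * r) ^ 2
        = ∑ t ∈ Finset.univ.erase (0 : F), ‖S t‖ ^ 2 := by
      have h1 : ‖S 0‖ ^ 2 + ∑ t ∈ Finset.univ.erase (0 : F), ‖S t‖ ^ 2
          = ∑ t : F, ‖S t‖ ^ 2 :=
        Finset.add_sum_erase Finset.univ (fun t => ‖S t‖ ^ 2) (Finset.mem_univ (0 : F))
      have h0 : ‖S 0‖ ^ 2 = ((P : ℝ) * r) ^ 2 := by
        rw [hS0, Complex.norm_natCast]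
        push_cast
        ring
      rw [← hqE, ← h1, h0]
      ring
    have hmain : ∑ t ∈ Finset.univ.erase (0 : F), ‖S t‖ ^ 2
        ≤ (Fintype.card F : ℝ) ^ n * ((Fintype.card F : ℝ) * r) := by
      calc ∑ t ∈ Finset.univ.erase (0 : F), ‖S t‖ ^ 2
          ≤ ∑ t ∈ Finset.univ.erase (0 : F),
              (Fintype.card F : ℝ) ^ n * ‖T (Fin.last n) t‖ ^ 2 :=
            Finset.sum_le_sum fun t ht => hSbound t (Finset.ne_of_mem_erase ht)
        _ = (Fintype.card F : ℝ) ^ n * ∑ t ∈ Finset.univ.erase (0 : F), ‖T (Fin.last n) t‖ ^ 2 :=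
            (Finset.mul_sum _ _ _).symm
        _ ≤ (Fintype.card F : ℝ) ^ n * ∑ t : F, ‖T (Fin.last n) t‖ ^ 2 := by
            refine mul_le_mul_of_nonneg_left ?_ (by positivity)
            exact Finset.sum_le_sum_of_subset_of_nonneg (Finset.subset_univ _)
              fun _ _ _ => by positivity
        _ = (Fintype.card F : ℝ) ^ n * ((Fintype.card F : ℝ) * r) := by rw [hTlast]
    have h2 : (Fintype.card F : ℝ) * (E : ℝ) - ((P : ℝ) * r) ^ 2
        ≤ (Fintype.card F : ℝ) ^ n * ((Fintype.card F : ℝ) * r) := hsplit ▸ hmain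
    rw [hvar1, show (E : ℝ) - ((P : ℝ) * r) ^ 2 / (Fintype.card F : ℝ)
        = ((Fintype.card F : ℝ) * (E : ℝ) - ((P : ℝ) * r) ^ 2) / (Fintype.card F : ℝ) by
          field_simp,
      div_le_iff₀ hqR]
    calc (Fintype.card F : ℝ) * (E : ℝ) - ((P : ℝ) * r) ^ 2
        ≤ (Fintype.card F : ℝ) ^ n * ((Fintype.card F : ℝ) * r) := h2
      _ = (Fintype.card F : ℝ) ^ n * r * (Fintype.card F : ℝ) := by ring
  -- Chebyshev
  set thr : ℝ := δ * Real.sqrt ((r : ℝ) * (Fintype.card F : ℝ) ^ (n - 1)) with hthr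
  set Bad : Finset F := Finset.univ.filter
    (fun b => thr ≤ |(solCount a g b r : ℝ) - m|) with hBad
  have hset : {b : F | thr ≤ |(solCount a g b r : ℝ) - m|} = (↑Bad : Set F) := by
    ext b
    simp [hBad]
  have hthr_nonneg : 0 ≤ thr := by
    rw [hthr]; positivity
  have hthr_sq : thr ^ 2 = δ ^ 2 * ((r : ℝ) * (Fintype.card F : ℝ) ^ (n - 1)) := by
    rw [hthr, mul_pow, Real.sq_sqrt (by positivity)]
  have hcheb : (Bad.card : ℝ) * thr ^ 2 ≤ ∑ b : F, ((solCount a g b r : ℝ) - m) ^ 2 := by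
    calc (Bad.card : ℝ) * thr ^ 2 = Bad.card • thr ^ 2 := by rw [nsmul_eq_mul]
      _ ≤ ∑ b ∈ Bad, ((solCount a g b r : ℝ) - m) ^ 2 := by
          refine Finset.card_nsmul_le_sum Bad _ _ fun b hb => ?_
          have hb' := (Finset.mem_filter.1 hb).2
          calc thr ^ 2 ≤ |(solCount a g b r : ℝ) - m| ^ 2 := pow_le_pow_left₀ hthr_nonneg hb' 2
            _ = ((solCount a g b r : ℝ) - m) ^ 2 := sq_abs _
      _ ≤ ∑ b : F, ((solCount a g b r : ℝ) - m) ^ 2 :=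
          Finset.sum_le_sum_of_subset_of_nonneg (Finset.subset_univ _) fun _ _ _ => by positivity
  -- conclusion
  have hgoal : ((Bad.card : ℝ)) ≤ (Fintype.card F : ℝ) / δ ^ 2 := by
    have hrR : (0 : ℝ) < (r : ℝ) := by exact_mod_cast hr1
    have hq1 : (0 : ℝ) < (Fintype.card F : ℝ) ^ (n - 1) := by positivity
    have hqn : (Fintype.card F : ℝ) ^ n = (Fintype.card F : ℝ) ^ (n - 1) * (Fintype.card F : ℝ) := by
      rw [← pow_succ]
      congr 1
      omega
    have H : (Bad.card : ℝ) * (δ ^ 2 * ((r : ℝ) * (Fintype.card F : ℝ) ^ (n - 1)))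
        ≤ (Fintype.card F : ℝ) ^ (n - 1) * (Fintype.card F : ℝ) * r := by
      calc (Bad.card : ℝ) * (δ ^ 2 * ((r : ℝ) * (Fintype.card F : ℝ) ^ (n - 1)))
          = (Bad.card : ℝ) * thr ^ 2 := by rw [hthr_sq]
        _ ≤ ∑ b : F, ((solCount a g b r : ℝ) - m) ^ 2 := hcheb
        _ ≤ (Fintype.card F : ℝ) ^ n * r := hvar
        _ = (Fintype.card F : ℝ) ^ (n - 1) * (Fintype.card F : ℝ) * r := by rw [hqn]
    rw [le_div_iff₀ (by positivity : (0 : ℝ) < δ ^ 2)]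
    have hpos : (0 : ℝ) < (r : ℝ) * (Fintype.card F : ℝ) ^ (n - 1) := by positivity
    have H2 : ((Bad.card : ℝ) * δ ^ 2) * ((r : ℝ) * (Fintype.card F : ℝ) ^ (n - 1))
        ≤ (Fintype.card F : ℝ) * ((r : ℝ) * (Fintype.card F : ℝ) ^ (n - 1)) := by
      nlinarith [H]
    exact le_of_mul_le_mul_right H2 hpos
  rw [show {b : F | δ * Real.sqrt ((r : ℝ) * (Fintype.card F : ℝ) ^ (n - 1)) ≤
      abs ((solCount a g b r : ℝ) - (r : ℝ) * (ordProd g : ℝ) / (Fintype.card F : ℝ))}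
      = {b : F | thr ≤ |(solCount a g b r : ℝ) - m|} from rfl]
  rw [hset, Set.ncard_coe_finset]
  exact hgoal
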